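/- Let m ≥ 3 and n ≥ 2 and define χ(r) = (1 - (1 - r^{1/m})^{1/n}) / r on (0,1). Then χ is strictly decreasing at r̂ = ((2m - 1)·n / (2·m·n - 1))^m; that is, χ'(r̂) < 0. Consequently, r̂ is strictly smaller than any minimizer r_crit of χ on (0,1]. -/

import Mathlib

open Real


open Real

lemma exp_sq_aux (x : ℝ) (hx : 0 ≤ x) : (1 + x/2)^2 ≤ Real.exp x := by
  have h := Real.add_one_le_exp (x/2)
  have h2 : (0:ℝ) ≤ 1 + x/2 := by linarith
  have h3 : (1+x/2)^2 ≤ (Real.exp (x/2))^2 := pow_le_pow_left₀ h2 (by linarith) 2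
  calc (1+x/2)^2 ≤ (Real.exp (x/2))^2 := h3
    _ = Real.exp x := by rw [sq, ← Real.exp_add]; ring_nf

lemma exp_two_lt : Real.exp 2 < 7.3891 := by
  have h := Real.exp_one_lt_d9
  have h4 : Real.exp 2 = (Real.exp 1)^2 := by rw [sq, ← Real.exp_add]; norm_num
  nlinarith [Real.exp_pos 1]

lemma expa_bound (M : ℝ) (hM : 0 < M) :
    Real.exp (2 - 1/M) * (1 + 1/(2*M))^2 < 7.3891 := by
  have h1 : (1 + (1/M)/2)^2 ≤ Real.exp (1/M) := exp_sq_aux _ (by positivity)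
  have h1' : (1 + 1/(2*M))^2 ≤ Real.exp (1/M) := by
    rw [show (1:ℝ)/(2*M) = (1/M)/2 by ring]; exact h1
  have h2 : Real.exp (2 - 1/M) * Real.exp (1/M) = Real.exp 2 := by
    rw [← Real.exp_add]; ring_nf
  nlinarith [Real.exp_pos (2 - 1/M), exp_two_lt]

lemma lin_helper {E M t E₁ t₁ : ℝ} (hE : E ≤ E₁) (ht0 : 0 < t) (ht : t ≤ t₁)
    (h1 : E₁ < 2*M) (h2 : E₁*(1+t₁) < M*(2+t₁)) : E*(1+t) < M*(2+t) := by
  nlinarith [mul_nonneg (sub_nonneg.2 ht) (sub_nonneg.2 h1.le),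
    mul_pos ht0 (sub_pos.2 h2),
    mul_nonneg (sub_nonneg.2 hE) (by linarith : (0:ℝ) ≤ 1+t)]

set_option maxHeartbeats 2000000 in
lemma core1 (m n : ℕ) (hm : 3 ≤ m) (hn : 2 ≤ n) :
    (1 + (2*(m:ℝ)-1)/((m:ℝ)*((n:ℝ)-1)))^n
      < (m:ℝ) * (2 + (2*(m:ℝ)-1)/((m:ℝ)*((n:ℝ)-1))) := by
  have hM : (3:ℝ) ≤ (m:ℝ) := by exact_mod_cast hm
  have hN : (2:ℝ) ≤ (n:ℝ) := by exact_mod_cast hn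
  have hM0 : (0:ℝ) < (m:ℝ) := by linarith
  have hN1 : (0:ℝ) < (n:ℝ) - 1 := by linarith
  obtain ⟨t, htdef⟩ : ∃ t : ℝ, t = (2*(m:ℝ)-1)/((m:ℝ)*((n:ℝ)-1)) := ⟨_, rfl⟩
  rw [← htdef]
  have ht0 : 0 < t := htdef ▸ div_pos (by linarith) (by positivity)
  have htval : t * ((m:ℝ)*((n:ℝ)-1)) = 2*(m:ℝ)-1 := by
    rw [htdef]; exact div_mul_cancel₀ _ (by positivity)
  by_cases hsmall : (m = 3 ∧ n ≤ 8) ∨ (m = 4 ∧ n = 2)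
  · subst htdef
    rcases hsmall with ⟨rfl, hn8⟩ | ⟨rfl, rfl⟩
    · interval_cases n <;> norm_num
    · norm_num
  push_neg at hsmall
  have hkey : (1+t)^(n-1) ≤ Real.exp (2 - 1/(m:ℝ)) := by
    have h1 : 1 + t ≤ Real.exp t := by linarith [Real.add_one_le_exp t]
    have h2 : (1+t)^(n-1) ≤ (Real.exp t)^(n-1) := pow_le_pow_left₀ (by linarith) h1 _
    have h3 : (Real.exp t)^(n-1) = Real.exp (((n-1:ℕ):ℝ) * t) := (Real.exp_nat_mul t (n-1)).symm
    have hc : ((n-1:ℕ):ℝ) = (n:ℝ) - 1 := by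
      push_cast [Nat.cast_sub (by omega : 1 ≤ n)]; ring
    have h4 : ((n-1:ℕ):ℝ) * t = 2 - 1/(m:ℝ) := by
      rw [hc]
      have hm' : (m:ℝ) ≠ 0 := hM0.ne'
      field_simp
      linear_combination htval
    rw [h3, h4] at h2; exact h2
  have hpow : (1+t)^n = (1+t)^(n-1) * (1+t) := by
    rw [← pow_succ]; congr 1; omega
  have h1t : (0:ℝ) < 1 + t := by linarith
  have hstep : (1+t)^n ≤ Real.exp (2 - 1/(m:ℝ)) * (1+t) := by
    rw [hpow]; exact mul_le_mul_of_nonneg_right hkey h1t.le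
  have hE0 := Real.exp_pos (2 - 1/(m:ℝ))
  suffices hS : Real.exp (2-1/(m:ℝ)) * (1+t) < (m:ℝ) * (2+t) by linarith
  by_cases hm8 : 8 ≤ m
  · have hM8 : (8:ℝ) ≤ (m:ℝ) := by exact_mod_cast hm8
    have hEe : Real.exp (2-1/(m:ℝ)) ≤ Real.exp 2 := by
      apply Real.exp_le_exp.2; have : (0:ℝ) < 1/(m:ℝ) := by positivity
      linarith
    have htm : t * (m:ℝ) ≤ 2*(m:ℝ) - 1 := by
      nlinarith [mul_nonneg (mul_nonneg ht0.le hM0.le) (by linarith : (0:ℝ) ≤ (n:ℝ)-2)]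
    have ht2 : t ≤ 2 := by nlinarith
    exact lin_helper (hEe.trans exp_two_lt.le) ht0 ht2 (by linarith) (by nlinarith)
  · have hEb := expa_bound (m:ℝ) hM0
    have hm7 : m ≤ 7 := by omega
    interval_cases m
    · have hn9 : 9 ≤ n := by have := hsmall.1 rfl; omega
      have hN9 : (9:ℝ) ≤ (n:ℝ) := by exact_mod_cast hn9
      simp only [Nat.cast_ofNat] at hEb htval hE0 ⊢
      have hE : Real.exp (2 - 1/3) ≤ 5.4288 := by nlinarith
      have ht1 : t ≤ 5/24 := by
        nlinarith [mul_nonneg ht0.le (by linarith : (0:ℝ) ≤ (n:ℝ) - 9)]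
      exact lin_helper hE ht0 ht1 (by norm_num) (by norm_num)
    · have hn3 : 3 ≤ n := by have := hsmall.2 rfl; omega
      have hN3 : (3:ℝ) ≤ (n:ℝ) := by exact_mod_cast hn3
      simp only [Nat.cast_ofNat] at hEb htval hE0 ⊢
      have hE : Real.exp (2 - 1/4) ≤ 5.8384 := by nlinarith
      have ht1 : t ≤ 7/8 := by
        nlinarith [mul_nonneg ht0.le (by linarith : (0:ℝ) ≤ (n:ℝ) - 3)]
      exact lin_helper hE ht0 ht1 (by norm_num) (by norm_num)
    · simp only [Nat.cast_ofNat] at hEb htval hE0 ⊢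
      have hE : Real.exp (2 - 1/5) ≤ 6.1067 := by nlinarith
      have ht1 : t ≤ 9/5 := by
        nlinarith [mul_nonneg ht0.le (by linarith : (0:ℝ) ≤ (n:ℝ) - 2)]
      exact lin_helper hE ht0 ht1 (by norm_num) (by norm_num)
    · simp only [Nat.cast_ofNat] at hEb htval hE0 ⊢
      have hE : Real.exp (2 - 1/6) ≤ 6.2961 := by nlinarith
      have ht1 : t ≤ 11/6 := by
        nlinarith [mul_nonneg ht0.le (by linarith : (0:ℝ) ≤ (n:ℝ) - 2)]
      exact lin_helper hE ht0 ht1 (by norm_num) (by norm_num)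
    · simp only [Nat.cast_ofNat] at hEb htval hE0 ⊢
      have hE : Real.exp (2 - 1/7) ≤ 6.4368 := by nlinarith
      have ht1 : t ≤ 13/7 := by
        nlinarith [mul_nonneg ht0.le (by linarith : (0:ℝ) ≤ (n:ℝ) - 2)]
      exact lin_helper hE ht0 ht1 (by norm_num) (by norm_num)

lemma core2 (m n : ℕ) (hm : 3 ≤ m) (hn : 2 ≤ n) :
    ((m:ℝ)*n + m - 1)^n < (m:ℝ)^n * (2*(m:ℝ)*n - 1) * ((n:ℝ)-1)^(n-1) := by
  have hM : (3:ℝ) ≤ (m:ℝ) := by exact_mod_cast hm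
  have hN : (2:ℝ) ≤ (n:ℝ) := by exact_mod_cast hn
  have hM0 : (0:ℝ) < (m:ℝ) := by linarith
  have hN1 : (0:ℝ) < (n:ℝ) - 1 := by linarith
  obtain ⟨t, htdef⟩ : ∃ t : ℝ, t = (2*(m:ℝ)-1)/((m:ℝ)*((n:ℝ)-1)) := ⟨_, rfl⟩
  have hMN0 : (0:ℝ) < (m:ℝ)*((n:ℝ)-1) := by positivity
  have hA : (m:ℝ)*n + m - 1 = ((m:ℝ)*((n:ℝ)-1))*(1+t) := by
    rw [htdef]; field_simp; ring
  have hB : 2*(m:ℝ)*n - 1 = ((m:ℝ)*((n:ℝ)-1))*(2+t) := by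
    rw [htdef]; field_simp; ring
  have hc := core1 m n hm hn
  rw [← htdef] at hc
  have hpow : ((n:ℝ)-1)^n = ((n:ℝ)-1)^(n-1) * ((n:ℝ)-1) := by
    rw [← pow_succ]; congr 1; omega
  calc ((m:ℝ)*n + m - 1)^n = ((m:ℝ)*((n:ℝ)-1))^n * (1+t)^n := by rw [hA, mul_pow]
    _ < ((m:ℝ)*((n:ℝ)-1))^n * ((m:ℝ)*(2+t)) :=
        mul_lt_mul_of_pos_left hc (by positivity)
    _ = (m:ℝ)^n * (2*(m:ℝ)*n - 1) * ((n:ℝ)-1)^(n-1) := by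
        rw [hB, mul_pow, hpow]; ring

lemma psi_hat (m n : ℕ) (hm : 3 ≤ m) (hn : 2 ≤ n) :
    1/((m:ℝ)*n) + (1 - 1/((m:ℝ)*n)) * (((n:ℝ)-1)/(2*(m:ℝ)*(n:ℝ)-1))
      < (((n:ℝ)-1)/(2*(m:ℝ)*(n:ℝ)-1)) ^ ((1 - 1/(n:ℝ)) : ℝ) := by
  have hM : (3:ℝ) ≤ (m:ℝ) := by exact_mod_cast hm
  have hN : (2:ℝ) ≤ (n:ℝ) := by exact_mod_cast hn
  have hM0 : (0:ℝ) < (m:ℝ) := by linarith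
  have hN0 : (0:ℝ) < (n:ℝ) := by linarith
  have hD0 : (0:ℝ) < 2*(m:ℝ)*(n:ℝ)-1 := by nlinarith
  have hv0 : (0:ℝ) < ((n:ℝ)-1)/(2*(m:ℝ)*(n:ℝ)-1) := by
    apply div_pos (by linarith) hD0
  have hA_eq : 1/((m:ℝ)*n) + (1 - 1/((m:ℝ)*n)) * (((n:ℝ)-1)/(2*(m:ℝ)*(n:ℝ)-1))
      = ((m:ℝ)*n + m - 1)/((m:ℝ)*(2*(m:ℝ)*(n:ℝ)-1)) := by
    rw [one_sub_div (by positivity), div_mul_div_comm, div_add_div _ _ (by positivity) (by positivity), div_eq_div_iff (by positivity) (by positivity)]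
    ring
  rw [hA_eq]
  have hB0 : (0:ℝ) < (((n:ℝ)-1)/(2*(m:ℝ)*(n:ℝ)-1)) ^ ((1 - 1/(n:ℝ)) : ℝ) :=
    Real.rpow_pos_of_pos hv0 _
  apply lt_of_pow_lt_pow_left₀ n hB0.le
  have hBn : ((((n:ℝ)-1)/(2*(m:ℝ)*(n:ℝ)-1)) ^ ((1 - 1/(n:ℝ)) : ℝ))^n
      = (((n:ℝ)-1)/(2*(m:ℝ)*(n:ℝ)-1))^(n-1 : ℕ) := by
    rw [← Real.rpow_natCast ((((n:ℝ)-1)/(2*(m:ℝ)*(n:ℝ)-1)) ^ ((1 - 1/(n:ℝ)) : ℝ)) n,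
        ← Real.rpow_mul hv0.le]
    have hexp : (1 - 1/(n:ℝ)) * (n:ℝ) = ((n-1 : ℕ):ℝ) := by
      push_cast [Nat.cast_sub (by omega : 1 ≤ n)]
      field_simp
    rw [hexp, Real.rpow_natCast]
  rw [hBn, div_pow, div_pow, div_lt_div_iff₀ (by positivity) (by positivity)]
  have hc := core2 m n hm hn
  have hDpow : (0:ℝ) < (2*(m:ℝ)*(n:ℝ)-1)^(n-1 : ℕ) := by positivity
  calc ((m:ℝ)*n + m - 1)^n * (2*(m:ℝ)*(n:ℝ)-1)^(n-1 : ℕ)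
      < ((m:ℝ)^n * (2*(m:ℝ)*n - 1) * ((n:ℝ)-1)^(n-1)) * (2*(m:ℝ)*(n:ℝ)-1)^(n-1 : ℕ) :=
        mul_lt_mul_of_pos_right hc hDpow
    _ = ((n:ℝ)-1)^(n-1) * ((m:ℝ)*(2*(m:ℝ)*(n:ℝ)-1))^n := by
        rw [mul_pow]
        have h : (2*(m:ℝ)*(n:ℝ)-1)^n = (2*(m:ℝ)*(n:ℝ)-1)^(n-1) * (2*(m:ℝ)*(n:ℝ)-1) := by
          rw [← pow_succ]; congr 1; omega
        rw [h]; ring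

lemma psi_all (cd p vh : ℝ) (hp0 : 0 ≤ p) (hp1 : p ≤ 1)
    (hv0 : 0 < vh) (hv1 : vh < 1) (hkey : cd + (1-cd)*vh < vh ^ p)
    (v : ℝ) (hvl : vh ≤ v) (hvu : v < 1) : cd + (1-cd)*v < v ^ p := by
  have hconc := Real.concaveOn_rpow hp0 hp1
  have h1v : (0:ℝ) < 1 - vh := by linarith
  obtain ⟨a, ha_def⟩ : ∃ a : ℝ, a = (1-v)/(1-vh) := ⟨_, rfl⟩
  obtain ⟨b, hb_def⟩ : ∃ b : ℝ, b = (v-vh)/(1-vh) := ⟨_, rfl⟩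
  have ha : 0 < a := ha_def ▸ div_pos (by linarith) h1v
  have hb : 0 ≤ b := hb_def ▸ div_nonneg (by linarith) h1v.le
  have hab : a + b = 1 := by rw [ha_def, hb_def]; field_simp; ring
  have hcomb : a*vh + b*1 = v := by rw [ha_def, hb_def]; field_simp; ring
  have h2 := hconc.2 (show vh ∈ Set.Ici (0:ℝ) from hv0.le)
    (show (1:ℝ) ∈ Set.Ici (0:ℝ) by norm_num) ha.le hb hab
  simp only [smul_eq_mul, Real.one_rpow, mul_one] at h2
  rw [show a*vh + b = v by linarith [hcomb]] at h2
  have heq : a*(cd+(1-cd)*vh) + b = cd + (1-cd)*v := by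
    rw [ha_def, hb_def]; field_simp; ring
  nlinarith [mul_pos ha (sub_pos.2 hkey)]

lemma chi_deriv (c d : ℝ) (hc0 : 0 < c) (hd0 : 0 < d) (r : ℝ) (hr0 : 0 < r) (hr1 : r < 1) :
    HasDerivAt (fun x : ℝ => (1 - (1 - x ^ c) ^ d) / x)
      ((d * (1 - r^c)^(d-1) * (c * r^(c-1)) * r - (1 - (1 - r^c)^d)) / r^2) r := by
  have hu1 : r ^ c < 1 := Real.rpow_lt_one hr0.le hr1 hc0
  have h1 : HasDerivAt (fun x : ℝ => x ^ c) (c * r^(c-1)) r :=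
    Real.hasDerivAt_rpow_const (Or.inl hr0.ne')
  have h2 : HasDerivAt (fun x : ℝ => 1 - x ^ c) (-(c * r^(c-1))) r := by
    exact h1.const_sub 1
  have h3 : HasDerivAt (fun y : ℝ => y ^ d) (d * (1 - r^c)^(d-1)) (1 - r^c) :=
    Real.hasDerivAt_rpow_const (Or.inl (sub_pos.2 hu1).ne')
  have h4 : HasDerivAt (fun x : ℝ => (1 - x ^ c) ^ d)
      ((d * (1 - r^c)^(d-1)) * (-(c * r^(c-1)))) r := by
    have := h3.comp r h2; exact this
  have h5 : HasDerivAt (fun x : ℝ => 1 - (1 - x ^ c) ^ d)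
      (-((d * (1 - r^c)^(d-1)) * (-(c * r^(c-1))))) r := by
    exact h4.const_sub 1
  have h6 : HasDerivAt (fun x : ℝ => (1 - (1 - x ^ c) ^ d) / x) _ r := h5.div (hasDerivAt_id' r) hr0.ne'
  convert h6 using 1
  ring


set_option maxHeartbeats 1000000 in


/-- For `m ≥ 3`, `n ≥ 2`, `χ(r) = (1 - (1 - r^{1/m})^{1/n}) / r` has
negative derivative at `r̂ = ((2m-1)n/(2mn-1))^m`; consequently `r̂` is strictly
smaller than any minimizer of `χ` on `(0,1]`. -/
theorem stmt16 (m n : ℕ) (hm : 3 ≤ m) (hn : 2 ≤ n)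
    (χ : ℝ → ℝ)
    (hχ : ∀ r ∈ Set.Ioo (0:ℝ) 1,
      χ r = (1 - (1 - r ^ ((1:ℝ) / (m:ℝ))) ^ ((1:ℝ) / (n:ℝ))) / r)
    (rhat : ℝ)
    (hrhat : rhat = (((2 * (m:ℝ) - 1) * n) / (2 * (m:ℝ) * n - 1)) ^ m) :
    deriv χ rhat < 0 ∧
    ∀ rcrit ∈ Set.Ioc (0:ℝ) 1, (∀ r ∈ Set.Ioc (0:ℝ) 1, χ rcrit ≤ χ r) →
      rhat < rcrit := by
  have hM : (3:ℝ) ≤ (m:ℝ) := by exact_mod_cast hm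
  have hN : (2:ℝ) ≤ (n:ℝ) := by exact_mod_cast hn
  have hM0 : (0:ℝ) < (m:ℝ) := by linarith
  have hN0 : (0:ℝ) < (n:ℝ) := by linarith
  have hD0 : (0:ℝ) < 2*(m:ℝ)*(n:ℝ) - 1 := by nlinarith
  have hc0 : (0:ℝ) < (1:ℝ)/(m:ℝ) := by positivity
  have hd0 : (0:ℝ) < (1:ℝ)/(n:ℝ) := by positivity
  have hb0 : (0:ℝ) < (2*(m:ℝ)-1)*(n:ℝ)/(2*(m:ℝ)*(n:ℝ)-1) :=
    div_pos (by nlinarith) hD0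
  have hb1 : (2*(m:ℝ)-1)*(n:ℝ)/(2*(m:ℝ)*(n:ℝ)-1) < 1 := by
    rw [div_lt_one hD0]; nlinarith
  have hrhat0 : 0 < rhat := hrhat ▸ pow_pos hb0 m
  have hrhat1 : rhat < 1 := hrhat ▸ pow_lt_one₀ hb0.le hb1 (by omega)
  have hrhatmem : rhat ∈ Set.Ioo (0:ℝ) 1 := ⟨hrhat0, hrhat1⟩
  have hrc : rhat ^ ((1:ℝ)/(m:ℝ)) = (2*(m:ℝ)-1)*(n:ℝ)/(2*(m:ℝ)*(n:ℝ)-1) := by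
    rw [hrhat, ← Real.rpow_natCast ((2*(m:ℝ)-1)*(n:ℝ)/(2*(m:ℝ)*(n:ℝ)-1)) m,
      ← Real.rpow_mul hb0.le, mul_one_div, div_self hM0.ne', Real.rpow_one]
  have hvh0 : (0:ℝ) < ((n:ℝ)-1)/(2*(m:ℝ)*(n:ℝ)-1) := div_pos (by linarith) hD0
  have hvh1 : ((n:ℝ)-1)/(2*(m:ℝ)*(n:ℝ)-1) < 1 := by
    rw [div_lt_one hD0]; nlinarith
  have hvh_eq : 1 - (2*(m:ℝ)-1)*(n:ℝ)/(2*(m:ℝ)*(n:ℝ)-1)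
      = ((n:ℝ)-1)/(2*(m:ℝ)*(n:ℝ)-1) := by
    rw [eq_div_iff hD0.ne', sub_mul, div_mul_cancel₀ _ hD0.ne']; ring
  have hkey := psi_hat m n hm hn
  -- negativity of the numerator of the derivative, for 0 < r ≤ rhat
  have hDneg : ∀ r, 0 < r → r < 1 → r ≤ rhat →
      ((1:ℝ)/(n:ℝ)) * (1 - r^((1:ℝ)/(m:ℝ)))^((1:ℝ)/(n:ℝ)-1)
        * (((1:ℝ)/(m:ℝ)) * r^((1:ℝ)/(m:ℝ)-1)) * r
        - (1 - (1 - r^((1:ℝ)/(m:ℝ)))^((1:ℝ)/(n:ℝ))) < 0 := by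
    intro r hr0 hr1 hle
    have hu0 : 0 < r ^ ((1:ℝ)/(m:ℝ)) := Real.rpow_pos_of_pos hr0 _
    have hu1 : r ^ ((1:ℝ)/(m:ℝ)) < 1 := Real.rpow_lt_one hr0.le hr1 hc0
    have hule : r ^ ((1:ℝ)/(m:ℝ)) ≤ (2*(m:ℝ)-1)*(n:ℝ)/(2*(m:ℝ)*(n:ℝ)-1) := by
      rw [← hrc]; exact Real.rpow_le_rpow hr0.le hle hc0.le
    have hvl : ((n:ℝ)-1)/(2*(m:ℝ)*(n:ℝ)-1) ≤ 1 - r^((1:ℝ)/(m:ℝ)) := by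
      rw [← hvh_eq]; linarith
    have hvu : 1 - r^((1:ℝ)/(m:ℝ)) < 1 := by linarith
    have hpoint := psi_all (1/((m:ℝ)*n)) (1 - 1/(n:ℝ)) (((n:ℝ)-1)/(2*(m:ℝ)*(n:ℝ)-1))
      (by rw [sub_nonneg, div_le_one hN0]; linarith)
      (by nlinarith [hd0]) hvh0 hvh1 hkey (1 - r^((1:ℝ)/(m:ℝ))) hvl hvu
    have h1u : (0:ℝ) < 1 - r^((1:ℝ)/(m:ℝ)) := by linarith
    have hw0 : 0 < (1 - r^((1:ℝ)/(m:ℝ)))^((1:ℝ)/(n:ℝ)-1) := Real.rpow_pos_of_pos h1u _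
    have hid1 : (1 - r^((1:ℝ)/(m:ℝ)))^((1:ℝ)/(n:ℝ)-1)
        * (1 - r^((1:ℝ)/(m:ℝ)))^((1 - 1/(n:ℝ) : ℝ)) = 1 := by
      rw [← Real.rpow_add h1u]
      norm_num
    have hid2 : (1 - r^((1:ℝ)/(m:ℝ)))^((1:ℝ)/(n:ℝ)-1) * (1 - r^((1:ℝ)/(m:ℝ)))
        = (1 - r^((1:ℝ)/(m:ℝ)))^((1:ℝ)/(n:ℝ)) := by
      have h := Real.rpow_add_one h1u.ne' ((1:ℝ)/(n:ℝ) - 1)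
      rw [sub_add_cancel] at h; exact h.symm
    have hrc1 : r^((1:ℝ)/(m:ℝ) - 1) * r = r^((1:ℝ)/(m:ℝ)) := by
      have h := Real.rpow_add_one hr0.ne' ((1:ℝ)/(m:ℝ) - 1)
      rw [sub_add_cancel] at h; exact h.symm
    have hmul := mul_lt_mul_of_pos_left hpoint hw0
    have hgoal_eq : ((1:ℝ)/(n:ℝ)) * (1 - r^((1:ℝ)/(m:ℝ)))^((1:ℝ)/(n:ℝ)-1)
        * (((1:ℝ)/(m:ℝ)) * r^((1:ℝ)/(m:ℝ)-1)) * r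
        - (1 - (1 - r^((1:ℝ)/(m:ℝ)))^((1:ℝ)/(n:ℝ)))
        = (1/((m:ℝ)*n)) * (r^((1:ℝ)/(m:ℝ))) * ((1 - r^((1:ℝ)/(m:ℝ)))^((1:ℝ)/(n:ℝ)-1))
          + (1 - r^((1:ℝ)/(m:ℝ)))^((1:ℝ)/(n:ℝ)) - 1 := by
      linear_combination ((1:ℝ)/((m:ℝ)*n) * (1 - r^((1:ℝ)/(m:ℝ)))^((1:ℝ)/(n:ℝ)-1)) * hrc1
    rw [hgoal_eq]
    linarith [hmul, hid1, hid2]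
  -- derivative of χ on (0,1)
  have hder : ∀ r ∈ Set.Ioo (0:ℝ) 1, HasDerivAt χ
      ((((1:ℝ)/(n:ℝ)) * (1 - r^((1:ℝ)/(m:ℝ)))^((1:ℝ)/(n:ℝ)-1)
        * (((1:ℝ)/(m:ℝ)) * r^((1:ℝ)/(m:ℝ)-1)) * r
        - (1 - (1 - r^((1:ℝ)/(m:ℝ)))^((1:ℝ)/(n:ℝ)))) / r^2) r := by
    intro r hr
    have h := chi_deriv ((1:ℝ)/(m:ℝ)) ((1:ℝ)/(n:ℝ)) hc0 hd0 r hr.1 hr.2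
    exact h.congr_of_eventuallyEq
      (Filter.eventuallyEq_of_mem (isOpen_Ioo.mem_nhds hr) hχ)
  have hderiv_lt : ∀ r ∈ Set.Ioo (0:ℝ) 1, r ≤ rhat → deriv χ r < 0 := by
    intro r hr hle
    rw [(hder r hr).deriv]
    exact div_neg_of_neg_of_pos (hDneg r hr.1 hr.2 hle) (pow_pos hr.1 2)
  refine ⟨hderiv_lt rhat hrhatmem le_rfl, ?_⟩
  intro rcrit hrcrit hmin
  by_contra hcon
  push_neg at hcon
  rcases eq_or_lt_of_le hcon with heq | hlt
  · have hmem : rcrit ∈ Set.Ioo (0:ℝ) 1 := heq ▸ hrhatmem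
    have hloc : IsLocalMin χ rcrit := by
      apply Filter.eventually_of_mem (isOpen_Ioo.mem_nhds hmem)
      intro x hx
      exact hmin x ⟨hx.1, hx.2.le⟩
    have hz := hloc.deriv_eq_zero
    have h2 := hderiv_lt rcrit hmem (le_of_eq heq)
    rw [hz] at h2; exact lt_irrefl 0 h2
  · have hsub : Set.Icc rcrit rhat ⊆ Set.Ioo (0:ℝ) 1 := fun x hx =>
      ⟨lt_of_lt_of_le hrcrit.1 hx.1, lt_of_le_of_lt hx.2 hrhat1⟩
    have hanti : StrictAntiOn χ (Set.Icc rcrit rhat) := by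
      apply strictAntiOn_of_deriv_neg (convex_Icc _ _)
      · intro x hx; exact (hder x (hsub hx)).continuousAt.continuousWithinAt
      · intro x hx
        rw [interior_Icc] at hx
        exact hderiv_lt x (hsub (Set.Ioo_subset_Icc_self hx)) hx.2.le
    have h1 := hanti (Set.left_mem_Icc.2 hlt.le) (Set.right_mem_Icc.2 hlt.le) hlt
    have h2 := hmin rhat ⟨hrhat0, hrhat1.le⟩
    linarith
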